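/- Let (X, 𝒜, 𝒩) be a measurable space with a σ-ideal 𝒩 ⊆ 𝒜, and let ℰ ⊆ 𝒜. If every subcollection of 𝒜 admits an 𝒩-essential supremum, then every compatible family (g_E)_{E ∈ ℰ} of measurable functions g_E : X → ℝ admits a gluing, i.e., a measurable g : X → ℝ with E ∩ {g ≠ g_E} ∈ 𝒩 for all E ∈ ℰ. -/
import Mathlib


open MeasureTheory

/-- `N` is a σ-ideal of the σ-algebra: all members are measurable, it contains `∅`,
is closed under measurable subsets and under countable unions. -/
def IsSigmaIdeal {X : Type*} [MeasurableSpace X] (N : Set (Set X)) : Prop :=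
  (∀ s ∈ N, MeasurableSet s) ∧ ∅ ∈ N ∧
    (∀ s t : Set X, s ∈ N → t ⊆ s → MeasurableSet t → t ∈ N) ∧
    ∀ f : ℕ → Set X, (∀ n, f n ∈ N) → (⋃ n, f n) ∈ N

/-- `A` is an `N`-essential supremum of the collection `F` of measurable sets. -/
def IsEssSup {X : Type*} [MeasurableSpace X] (N : Set (Set X)) (F : Set (Set X))
    (A : Set X) : Prop :=
  MeasurableSet A ∧ (∀ E ∈ F, E \ A ∈ N) ∧
    ∀ B : Set X, MeasurableSet B → (∀ E ∈ F, E \ B ∈ N) → A \ B ∈ N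

/-- The infimum over rationals above `a` of their `EReal` coercions is `a`. -/
lemma iInf_rat_gt_ereal (a : ℝ) :
    (⨅ q : {q : ℚ // a < (q : ℝ)}, ((q.1 : ℝ) : EReal)) = (a : EReal) := by
  refine le_antisymm ?_ (le_iInf fun q => by exact_mod_cast q.2.le)
  refine le_of_forall_gt_imp_ge_of_dense fun c hc => ?_
  obtain ⟨q, hq1, hq2⟩ := EReal.exists_rat_btwn_of_lt hc
  have haq : a < (q : ℝ) := by exact_mod_cast hq1
  exact (iInf_le _ ⟨q, haq⟩).trans hq2.le

/-- If every subcollection of `𝒜` admits an `N`-essential supremum, then every compatible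
family `(g_E)_{E ∈ ℰ}` of measurable functions admits a gluing. -/
theorem gluing_of_localizable {X : Type*} [MeasurableSpace X]
    (N : Set (Set X)) (hN : IsSigmaIdeal N)
    (hloc : ∀ F : Set (Set X), (∀ E ∈ F, MeasurableSet E) → ∃ A, IsEssSup N F A)
    (ℰ : Set (Set X)) (hE : ∀ E ∈ ℰ, MeasurableSet E)
    (g : Set X → X → ℝ) (hg : ∀ E ∈ ℰ, Measurable (g E))
    (hcompat : ∀ E ∈ ℰ, ∀ E' ∈ ℰ, E ∩ E' ∩ {x | g E x ≠ g E' x} ∈ N) :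
    ∃ G : X → ℝ, Measurable G ∧ ∀ E ∈ ℰ, E ∩ {x | G x ≠ g E x} ∈ N := by
  classical
  obtain ⟨hNmeas, hN0, hNsub, hNunion⟩ := hN
  -- choose essential suprema A q of the sets E ∩ {g E < q}
  have hex : ∀ q : ℚ, ∃ A, IsEssSup N ((fun E => E ∩ {x | g E x < (q : ℝ)}) '' ℰ) A := by
    intro q
    apply hloc
    rintro _ ⟨E, hEm, rfl⟩
    exact (hE E hEm).inter (measurableSet_lt (hg E hEm) measurable_const)
  choose A hA using hex
  have hAmeas : ∀ q, MeasurableSet (A q) := fun q => (hA q).1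
  -- property 1 : E ∩ {g E < q} is essentially contained in A q
  have h1 : ∀ q : ℚ, ∀ E ∈ ℰ, (E ∩ {x | g E x < (q : ℝ)}) \ A q ∈ N := by
    intro q E hEm
    exact (hA q).2.1 _ ⟨E, hEm, rfl⟩
  -- property 2 : A q ∩ E ∩ {q ≤ g E} is null
  have h2 : ∀ q : ℚ, ∀ E ∈ ℰ, A q ∩ (E ∩ {x | (q : ℝ) ≤ g E x}) ∈ N := by
    intro q E hEm
    have hBm : MeasurableSet (Eᶜ ∪ {x | g E x < (q : ℝ)}) :=
      (hE E hEm).compl.union (measurableSet_lt (hg E hEm) measurable_const)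
    have hmin : A q \ (Eᶜ ∪ {x | g E x < (q : ℝ)}) ∈ N := by
      refine (hA q).2.2 _ hBm ?_
      rintro _ ⟨E', hE'm, rfl⟩
      refine hNsub _ _ (hcompat E' hE'm E hEm) ?_ ?_
      · rintro x ⟨⟨hxE', hxlt⟩, hxB⟩
        simp only [Set.mem_union, Set.mem_compl_iff, Set.mem_setOf_eq, not_or, not_lt] at hxB
        refine ⟨⟨hxE', not_not.1 hxB.1⟩, ?_⟩
        exact ne_of_lt (lt_of_lt_of_le hxlt hxB.2)
      · exact ((hE E' hE'm).inter
          (measurableSet_lt (hg E' hE'm) measurable_const)).diff hBm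
    refine hNsub _ _ hmin ?_ ?_
    · rintro x ⟨hxA, hxE, hxge⟩
      refine ⟨hxA, ?_⟩
      simp only [Set.mem_union, Set.mem_compl_iff, Set.mem_setOf_eq, not_or, not_lt]
      exact ⟨not_not.2 hxE, hxge⟩
    · exact (hAmeas q).inter ((hE E hEm).inter
        (measurableSet_le measurable_const (hg E hEm)))
  -- the glued function, via EReal infimum
  set G' : X → EReal := fun x => ⨅ q : ℚ, (if x ∈ A q then ((q : ℝ) : EReal) else ⊤) with hG'
  have hG'meas : Measurable G' := by
    refine Measurable.iInf fun q => ?_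
    exact Measurable.ite (hAmeas q) measurable_const measurable_const
  set G : X → ℝ := fun x => (G' x).toReal with hGdef
  have hGmeas : Measurable G := hG'meas.ereal_toReal
  refine ⟨G, hGmeas, fun E hEm => ?_⟩
  -- the bad set
  obtain ⟨e, hesurj⟩ := exists_surjective_nat ℚ
  set S : Set X := ⋃ n : ℕ,
    (((E ∩ {x | g E x < ((e n : ℚ) : ℝ)}) \ A (e n)) ∪
      (A (e n) ∩ (E ∩ {x | ((e n : ℚ) : ℝ) ≤ g E x}))) with hS
  have hSN : S ∈ N := by
    refine hNunion _ fun n => ?_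
    have hu : ((E ∩ {x | g E x < ((e n : ℚ) : ℝ)}) \ A (e n)) ∈ N := h1 (e n) E hEm
    have hv := h2 (e n) E hEm
    have : (((E ∩ {x | g E x < ((e n : ℚ) : ℝ)}) \ A (e n)) ∪
        (A (e n) ∩ (E ∩ {x | ((e n : ℚ) : ℝ) ≤ g E x}))) =
        ⋃ m : ℕ, (if m = 0 then ((E ∩ {x | g E x < ((e n : ℚ) : ℝ)}) \ A (e n))
          else (A (e n) ∩ (E ∩ {x | ((e n : ℚ) : ℝ) ≤ g E x}))) := by
      ext x
      simp only [Set.mem_iUnion, Set.mem_union]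
      constructor
      · rintro (h | h)
        · exact ⟨0, by simpa using h⟩
        · exact ⟨1, by simpa using h⟩
      · rintro ⟨m, hm⟩
        by_cases h0 : m = 0
        · left; simpa [h0] using hm
        · right; simpa [h0] using hm
    rw [this]
    refine hNunion _ fun m => ?_
    by_cases h0 : m = 0 <;> simp [h0, hu, hv]
  -- on E \ S, membership in A q is characterized
  have hchar : ∀ x ∈ E, x ∉ S → ∀ q : ℚ, x ∈ A q ↔ g E x < (q : ℝ) := by
    intro x hxE hxS q
    obtain ⟨n, hn⟩ := hesurj q
    constructor
    · intro hxA
      by_contra hlt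
      exact hxS (Set.mem_iUnion.2 ⟨n, Or.inr (by rw [hn]; exact ⟨hxA, hxE, not_lt.1 hlt⟩)⟩)
    · intro hlt
      by_contra hxA
      exact hxS (Set.mem_iUnion.2 ⟨n, Or.inl (by rw [hn]; exact ⟨⟨hxE, hlt⟩, hxA⟩)⟩)
  -- on E \ S, G = g E
  have hval : ∀ x ∈ E, x ∉ S → G x = g E x := by
    intro x hxE hxS
    have hG'x : G' x = ((g E x : ℝ) : EReal) := by
      have key : ∀ q : ℚ, (if x ∈ A q then ((q : ℝ) : EReal) else ⊤) =
          (if g E x < (q : ℝ) then ((q : ℝ) : EReal) else ⊤) := by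
        intro q
        by_cases h : x ∈ A q
        · rw [if_pos h, if_pos ((hchar x hxE hxS q).1 h)]
        · rw [if_neg h, if_neg (fun hlt => h ((hchar x hxE hxS q).2 hlt))]
      rw [hG']
      simp only [key]
      rw [← iInf_rat_gt_ereal (g E x)]
      refine le_antisymm ?_ ?_
      · refine le_iInf fun q => ?_
        have := iInf_le (fun q : ℚ =>
          (if g E x < (q : ℝ) then ((q : ℝ) : EReal) else ⊤)) q.1
        rw [if_pos q.2] at this
        exact this
      · refine le_iInf fun q => ?_
        by_cases h : g E x < (q : ℝ)
        · rw [if_pos h]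
          exact iInf_le _ (⟨q, h⟩ : {q : ℚ // g E x < (q : ℝ)})
        · rw [if_neg h]; exact le_top
    rw [hGdef]
    simp only [hG'x, EReal.toReal_coe]
  -- conclude
  refine hNsub _ _ hSN ?_ ?_
  · rintro x ⟨hxE, hxne⟩
    by_contra hxS
    exact hxne (hval x hxE hxS)
  · exact (hE E hEm).inter
      ((measurableSet_eq_fun hGmeas (hg E hEm)).compl)
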